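/- (Derivative estimate for Gevrey quasi-norms, inequality (3.26)) Fix s > 1, h ∈ (0,1] and n ≥ 2, and let N̄_{m,k}(a,T) denote the Gevrey quasi-norm. Then for every smooth a : ℝ^n × ℝ^{n−1} → ℂ, every m, k ∈ ℝ, every ε > 0, every T > 0, and all multi-indices α ∈ ℕ^n, β ∈ ℕ^{n−1}, one has N̄_{m, k−|β|}(∂_x^α ∂_{ξ'}^β a, T) ≤ ε^{−s(|α|+|β|)} T^{−(|α|+|β|)} (α!)^s (β!)^s N̄_{m,k}(a, T(1+ε)^s). -/

import Mathlib

open scoped BigOperators Real ENNReal NNReal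
open MeasureTheory

noncomputable section

variable {n m : ℕ} {E : Type*} [NormedAddCommGroup E] [NormedSpace ℝ E]

/-- Partial derivative in the `i`-th coordinate of the first factor. -/
def pdx (i : Fin n) (f : (Fin n → ℝ) × (Fin m → ℝ) → E) :
    (Fin n → ℝ) × (Fin m → ℝ) → E :=
  fun p => fderiv ℝ f p (Pi.single i 1, 0)

/-- Partial derivative in the `j`-th coordinate of the second factor. -/
def pdy (j : Fin m) (f : (Fin n → ℝ) × (Fin m → ℝ) → E) :
    (Fin n → ℝ) × (Fin m → ℝ) → E :=
  fun p => fderiv ℝ f p (0, Pi.single j 1)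

/-- Iterated partial derivative ∂_x^α in the first factor. -/
def mdx (α : Fin n → ℕ) (f : (Fin n → ℝ) × (Fin m → ℝ) → E) :
    (Fin n → ℝ) × (Fin m → ℝ) → E :=
  (List.finRange n).foldr (fun i g => (pdx i)^[α i] g) f

/-- Iterated partial derivative ∂_y^β in the second factor. -/
def mdy (β : Fin m → ℕ) (f : (Fin n → ℝ) × (Fin m → ℝ) → E) :
    (Fin n → ℝ) × (Fin m → ℝ) → E :=
  (List.finRange m).foldr (fun j g => (pdy j)^[β j] g) f

/-- Partial derivative on a single Euclidean factor. -/
def pd {d : ℕ} (i : Fin d) (f : (Fin d → ℝ) → E) : (Fin d → ℝ) → E :=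
  fun x => fderiv ℝ f x (Pi.single i 1)

/-- Iterated partial derivative ∂^α on a single Euclidean factor. -/
def md {d : ℕ} (α : Fin d → ℕ) (f : (Fin d → ℝ) → E) : (Fin d → ℝ) → E :=
  (List.finRange d).foldr (fun i g => (pd i)^[α i] g) f

/-- Multi-index factorial `α!`. -/
def mfact {d : ℕ} (α : Fin d → ℕ) : ℕ := ∏ i, (α i).factorial

/-- Multi-index length `|α|`. -/
def msize {d : ℕ} (α : Fin d → ℕ) : ℕ := ∑ i, α i

/-- The Gevrey quasi-norm
`N̄_{m,k}(a,T) = sup_{(x,ξ')} Σ_{α,β} |∂_x^α ∂_{ξ'}^β a| T^{|α|+|β|} h^m ⟨ξ'⟩^{|β|-k} / (α!^s β!^s)`,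
with values in `[0,∞]`. -/
def qnorm (n : ℕ) (s h T m k : ℝ)
    (a : (Fin n → ℝ) × (Fin (n-1) → ℝ) → ℂ) : ℝ≥0∞ :=
  ⨆ p : (Fin n → ℝ) × (Fin (n-1) → ℝ),
    ∑' (α : Fin n → ℕ) (β : Fin (n-1) → ℕ),
      ENNReal.ofReal (‖mdx α (mdy β a) p‖ * T ^ (msize α + msize β) * h ^ m *
        (Real.sqrt (1 + ∑ i, (p.2 i) ^ 2)) ^ ((msize β : ℝ) - k) /
        ((mfact α * mfact β : ℕ) : ℝ) ^ s)


/-! ### Auxiliary: generic coordinate derivatives and commutation -/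

section Aux
variable {F : Type*} [NormedAddCommGroup F] [NormedSpace ℝ F]
  {G : Type*} [NormedAddCommGroup G] [NormedSpace ℝ G]

def pdv (v : G) (f : G → F) : G → F := fun p => fderiv ℝ f p v

lemma contDiff_fderiv' {f : G → F} (hf : ContDiff ℝ (⊤ : ℕ∞) f) :
    ContDiff ℝ (⊤ : ℕ∞) (fderiv ℝ f) :=
  hf.fderiv_right (m := (⊤ : ℕ∞)) (by exact_mod_cast le_rfl)

lemma contDiff_pdv {f : G → F} (hf : ContDiff ℝ (⊤ : ℕ∞) f) (v : G) :
    ContDiff ℝ (⊤ : ℕ∞) (pdv v f) :=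
  (contDiff_fderiv' hf).clm_apply contDiff_const

lemma pdv_apply_eq {f : G → F} (hf : ContDiff ℝ (⊤ : ℕ∞) f) (v w : G) (p : G) :
    pdv v (pdv w f) p = fderiv ℝ (fderiv ℝ f) p v w := by
  have hd : ContDiff ℝ (⊤ : ℕ∞) (fderiv ℝ f) := contDiff_fderiv' hf
  show fderiv ℝ (fun q => fderiv ℝ f q w) p v = _
  rw [fderiv_clm_apply (hd.differentiable (by simp) p)
    (differentiableAt_const w)]
  simp

lemma pdv_comm {f : G → F} (hf : ContDiff ℝ (⊤ : ℕ∞) f) (v w : G) :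
    pdv v (pdv w f) = pdv w (pdv v f) := by
  funext p
  rw [pdv_apply_eq hf, pdv_apply_eq hf]
  exact (hf.contDiffAt.isSymmSndFDerivAt (by rw [minSmoothness_of_isRCLikeNormedField]; exact WithTop.coe_le_coe.mpr le_top)) v w

def foldV {ι : Type*} (l : List ι) (V : ι → G) (e : ι → ℕ) (f : G → F) : G → F :=
  l.foldr (fun i g => (pdv (V i))^[e i] g) f

lemma contDiff_iter_pdv {f : G → F} (hf : ContDiff ℝ (⊤ : ℕ∞) f) (v : G) (k : ℕ) :
    ContDiff ℝ (⊤ : ℕ∞) ((pdv v)^[k] f) := by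
  induction k with
  | zero => exact hf
  | succ k ih => rw [Function.iterate_succ_apply']; exact contDiff_pdv ih v

lemma contDiff_foldV {ι : Type*} {f : G → F} (hf : ContDiff ℝ (⊤ : ℕ∞) f)
    (l : List ι) (V : ι → G) (e : ι → ℕ) :
    ContDiff ℝ (⊤ : ℕ∞) (foldV l V e f) := by
  induction l with
  | nil => exact hf
  | cons i l ih => exact contDiff_iter_pdv ih (V i) (e i)

lemma pdv_iter_comm {f : G → F} (hf : ContDiff ℝ (⊤ : ℕ∞) f) (v w : G) (k : ℕ) :
    pdv v ((pdv w)^[k] f) = (pdv w)^[k] (pdv v f) := by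
  induction k with
  | zero => rfl
  | succ k ih =>
      rw [Function.iterate_succ_apply', Function.iterate_succ_apply',
        pdv_comm (contDiff_iter_pdv hf w k) v w, ih]

lemma pdv_foldV {ι : Type*} {f : G → F} (hf : ContDiff ℝ (⊤ : ℕ∞) f)
    (l : List ι) (V : ι → G) (e : ι → ℕ) (v : G) :
    pdv v (foldV l V e f) = foldV l V e (pdv v f) := by
  induction l with
  | nil => rfl
  | cons i l ih =>
      show pdv v ((pdv (V i))^[e i] (foldV l V e f)) = (pdv (V i))^[e i] (foldV l V e (pdv v f))
      rw [pdv_iter_comm (contDiff_foldV hf l V e) v (V i) (e i), ih]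

lemma iter_pdv_foldV {ι : Type*} {f : G → F} (hf : ContDiff ℝ (⊤ : ℕ∞) f)
    (l : List ι) (V : ι → G) (e : ι → ℕ) (v : G) (k : ℕ) :
    (pdv v)^[k] (foldV l V e f) = foldV l V e ((pdv v)^[k] f) := by
  induction k with
  | zero => rfl
  | succ k ih =>
      rw [Function.iterate_succ_apply', ih, pdv_foldV (contDiff_iter_pdv hf v k) l V e v,
        ← Function.iterate_succ_apply' (pdv v) k f]

lemma foldV_foldV {ι κ : Type*} {f : G → F} (hf : ContDiff ℝ (⊤ : ℕ∞) f)
    (l : List ι) (V : ι → G) (e : ι → ℕ) (l' : List κ) (V' : κ → G) (e' : κ → ℕ) :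
    foldV l V e (foldV l' V' e' f) = foldV l' V' e' (foldV l V e f) := by
  induction l with
  | nil => rfl
  | cons i l ih =>
      show (pdv (V i))^[e i] (foldV l V e (foldV l' V' e' f))
        = foldV l' V' e' ((pdv (V i))^[e i] (foldV l V e f))
      rw [ih, iter_pdv_foldV (contDiff_foldV hf l V e) l' V' e' (V i) (e i)]

lemma foldV_add {ι : Type*} {f : G → F} (hf : ContDiff ℝ (⊤ : ℕ∞) f)
    (l : List ι) (V : ι → G) (e1 e2 : ι → ℕ) :
    foldV l V (fun i => e1 i + e2 i) f = foldV l V e1 (foldV l V e2 f) := by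
  induction l with
  | nil => rfl
  | cons i l ih =>
      show (pdv (V i))^[e1 i + e2 i] (foldV l V (fun i => e1 i + e2 i) f)
        = (pdv (V i))^[e1 i] (foldV l V e1 ((pdv (V i))^[e2 i] (foldV l V e2 f)))
      rw [ih, Function.iterate_add_apply,
        iter_pdv_foldV (contDiff_foldV hf l V e2) l V e1 (V i) (e2 i)]

end Aux

section Mdx
variable {f : (Fin n → ℝ) × (Fin m → ℝ) → E}

lemma mdx_eq_foldV (α : Fin n → ℕ) (f : (Fin n → ℝ) × (Fin m → ℝ) → E) :
    mdx α f = foldV (List.finRange n) (fun i => ((Pi.single i 1 : Fin n → ℝ), 0)) α f := rfl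

lemma mdy_eq_foldV (β : Fin m → ℕ) (f : (Fin n → ℝ) × (Fin m → ℝ) → E) :
    mdy β f = foldV (List.finRange m) (fun j => (0, (Pi.single j 1 : Fin m → ℝ))) β f := rfl

lemma contDiff_mdx (hf : ContDiff ℝ (⊤ : ℕ∞) f) (α : Fin n → ℕ) :
    ContDiff ℝ (⊤ : ℕ∞) (mdx α f) := contDiff_foldV hf _ _ _

lemma contDiff_mdy (hf : ContDiff ℝ (⊤ : ℕ∞) f) (β : Fin m → ℕ) :
    ContDiff ℝ (⊤ : ℕ∞) (mdy β f) := contDiff_foldV hf _ _ _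

lemma mdx_mdy_comm (hf : ContDiff ℝ (⊤ : ℕ∞) f) (α : Fin n → ℕ) (β : Fin m → ℕ) :
    mdy β (mdx α f) = mdx α (mdy β f) := by
  rw [mdx_eq_foldV, mdy_eq_foldV, mdx_eq_foldV, mdy_eq_foldV]
  exact (foldV_foldV hf _ _ _ _ _ _).symm

lemma mdx_add (hf : ContDiff ℝ (⊤ : ℕ∞) f) (α α' : Fin n → ℕ) :
    mdx (fun i => α i + α' i) f = mdx α' (mdx α f) := by
  rw [mdx_eq_foldV, mdx_eq_foldV, mdx_eq_foldV]
  rw [show (fun i => α i + α' i) = (fun i => α' i + α i) from funext fun i => add_comm _ _]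
  exact foldV_add hf _ _ α' α

lemma mdy_add (hf : ContDiff ℝ (⊤ : ℕ∞) f) (β β' : Fin m → ℕ) :
    mdy (fun j => β j + β' j) f = mdy β' (mdy β f) := by
  rw [mdy_eq_foldV, mdy_eq_foldV, mdy_eq_foldV]
  rw [show (fun j => β j + β' j) = (fun j => β' j + β j) from funext fun j => add_comm _ _]
  exact foldV_add hf _ _ β' β

/-- The key derivative rearrangement identity. -/
lemma mdx_mdy_key (hf : ContDiff ℝ (⊤ : ℕ∞) f)
    (α α' : Fin n → ℕ) (β β' : Fin m → ℕ) :
    mdx α' (mdy β' (mdx α (mdy β f))) =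
      mdx (fun i => α i + α' i) (mdy (fun j => β j + β' j) f) := by
  rw [mdx_mdy_comm (contDiff_mdy hf β) α β', mdy_add hf β β',
    mdx_add (contDiff_mdy (contDiff_mdy hf β) β') α α']

end Mdx

/-! ### Combinatorial lemmas -/

lemma choose_mul_pow_le {ε : ℝ} (hε : 0 ≤ ε) (N K : ℕ) :
    (N.choose K : ℝ) * ε ^ K ≤ (1 + ε) ^ N := by
  rcases le_or_gt K N with hKN | hKN
  · have hmem : K ∈ Finset.range (N + 1) := Finset.mem_range.mpr (Nat.lt_succ_of_le hKN)
    calc (N.choose K : ℝ) * ε ^ K = ε ^ K * 1 ^ (N - K) * (N.choose K : ℝ) := by ring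
      _ ≤ ∑ j ∈ Finset.range (N + 1), ε ^ j * 1 ^ (N - j) * (N.choose j : ℝ) :=
          Finset.single_le_sum (f := fun j => ε ^ j * 1 ^ (N - j) * (N.choose j : ℝ))
            (fun j _ => by positivity) hmem
      _ = (ε + 1) ^ N := (add_pow ε 1 N).symm
      _ = (1 + ε) ^ N := by ring
  · simp only [Nat.choose_eq_zero_of_lt hKN, Nat.cast_zero, zero_mul]
    positivity

lemma key_scalar (s ε T : ℝ) (hs : 0 ≤ s) (hε : 0 < ε) (hT : 0 < T)
    (B M M' : ℝ) (hB : 0 ≤ B) (hM : 0 ≤ M) (hM' : 0 ≤ M')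
    (N₀ N' N'' : ℕ) (hN : N'' = N₀ + N')
    (hbase : B * ε ^ N₀ ≤ (1 + ε) ^ N'') :
    T ^ N' * (B * M * M') ^ s ≤
      (ε ^ (-(s * (N₀ : ℝ))) * T ^ (-(N₀ : ℝ)) * M ^ s) *
        ((T * (1 + ε) ^ s) ^ N'' * M' ^ s) := by
  have h1ε : (0:ℝ) < 1 + ε := by linarith
  have key : B ^ s ≤ ε ^ (-(s * (N₀ : ℝ))) * (1 + ε) ^ (s * (N'' : ℝ)) := by
    have h1 : (B * ε ^ N₀) ^ s ≤ ((1 + ε) ^ N'') ^ s :=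
      Real.rpow_le_rpow (by positivity) hbase hs
    rw [Real.mul_rpow hB (by positivity), ← Real.rpow_natCast ε N₀,
      ← Real.rpow_natCast (1 + ε) N'', ← Real.rpow_mul hε.le, ← Real.rpow_mul h1ε.le] at h1
    rw [mul_comm (N₀ : ℝ) s, mul_comm (N'' : ℝ) s] at h1
    have hεpow : (0:ℝ) < ε ^ (s * (N₀ : ℝ)) := Real.rpow_pos_of_pos hε _
    rw [Real.rpow_neg hε.le, mul_comm ((ε ^ (s * (N₀:ℝ)))⁻¹) _, ← div_eq_mul_inv,
      le_div_iff₀ hεpow]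
    exact h1
  have hTpow : T ^ (-(N₀ : ℝ)) * (T * (1 + ε) ^ s) ^ N'' =
      T ^ N' * (1 + ε) ^ (s * (N'' : ℝ)) := by
    rw [mul_pow, ← Real.rpow_natCast T N'', ← Real.rpow_natCast ((1+ε)^s) N'',
      ← Real.rpow_mul h1ε.le, ← mul_assoc, ← Real.rpow_add hT, hN]
    push_cast
    rw [show -((N₀:ℝ)) + ((N₀:ℝ) + (N':ℝ)) = (N':ℝ) by ring, Real.rpow_natCast]
  calc T ^ N' * (B * M * M') ^ s
      = B ^ s * (T ^ N' * M ^ s * M' ^ s) := by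
        rw [Real.mul_rpow (by positivity) hM', Real.mul_rpow hB hM]; ring
    _ ≤ (ε ^ (-(s * (N₀:ℝ))) * (1 + ε) ^ (s * (N'':ℝ))) * (T ^ N' * M ^ s * M' ^ s) :=
        mul_le_mul_of_nonneg_right key (by positivity)
    _ = _ := by
        rw [show (ε ^ (-(s * (N₀ : ℝ))) * T ^ (-(N₀ : ℝ)) * M ^ s) *
            ((T * (1 + ε) ^ s) ^ N'' * M' ^ s)
          = ε ^ (-(s * (N₀ : ℝ))) * (T ^ (-(N₀ : ℝ)) * (T * (1 + ε) ^ s) ^ N'') *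
            (M ^ s * M' ^ s) by ring, hTpow]
        ring

lemma msize_add {d : ℕ} (α α' : Fin d → ℕ) :
    msize (fun i => α i + α' i) = msize α + msize α' := Finset.sum_add_distrib

lemma mfact_pos {d : ℕ} (α : Fin d → ℕ) : 0 < mfact α :=
  Finset.prod_pos fun i _ => (α i).factorial_pos

lemma mfact_add {d : ℕ} (α α' : Fin d → ℕ) :
    mfact (fun i => α i + α' i) =
      (∏ i, (α i + α' i).choose (α i)) * (mfact α * mfact α') := by
  rw [mfact, mfact, mfact, ← Finset.prod_mul_distrib, ← Finset.prod_mul_distrib]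
  refine Finset.prod_congr rfl fun i _ => ?_
  have hi := Nat.add_choose_mul_factorial_mul_factorial (α' i) (α i)
  rw [Nat.add_comm (α' i) (α i)] at hi
  rw [← hi]; ring

lemma bin_prod_bound {d : ℕ} {ε : ℝ} (hε : 0 ≤ ε) (α α' : Fin d → ℕ) :
    ((∏ i, (α i + α' i).choose (α i) : ℕ) : ℝ) * ε ^ (msize α) ≤
      (1 + ε) ^ (msize (fun i => α i + α' i)) := by
  rw [msize, msize]
  push_cast
  rw [← Finset.prod_pow_eq_pow_sum, ← Finset.prod_pow_eq_pow_sum, ← Finset.prod_mul_distrib]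
  exact Finset.prod_le_prod (fun i _ => by positivity)
    (fun i _ => choose_mul_pow_le hε _ _)

/-! ### Termwise inequality -/

lemma termwise_ineq (n : ℕ) (s h T m k ε : ℝ) (hs : 1 < s) (hh0 : 0 < h)
    (hε : 0 < ε) (hT : 0 < T)
    (a : (Fin n → ℝ) × (Fin (n-1) → ℝ) → ℂ) (ha : ContDiff ℝ (⊤ : ℕ∞) a)
    (α α' : Fin n → ℕ) (β β' : Fin (n-1) → ℕ) (p : (Fin n → ℝ) × (Fin (n-1) → ℝ)) :
    ‖mdx α' (mdy β' (mdx α (mdy β a))) p‖ * T ^ (msize α' + msize β') * h ^ m *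
        (Real.sqrt (1 + ∑ i, (p.2 i) ^ 2)) ^ ((msize β' : ℝ) - (k - (msize β : ℝ))) /
        ((mfact α' * mfact β' : ℕ) : ℝ) ^ s
      ≤ (ε ^ (-(s * ((msize α + msize β : ℕ) : ℝ))) *
            T ^ (-((msize α + msize β : ℕ) : ℝ)) *
            ((mfact α : ℕ) : ℝ) ^ s * ((mfact β : ℕ) : ℝ) ^ s) *
        (‖mdx (fun i => α i + α' i) (mdy (fun j => β j + β' j) a) p‖ *
          (T * (1 + ε) ^ s) ^
            (msize (fun i => α i + α' i) + msize (fun j => β j + β' j)) * h ^ m *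
          (Real.sqrt (1 + ∑ i, (p.2 i) ^ 2)) ^
            ((msize (fun j => β j + β' j) : ℝ) - k) /
          ((mfact (fun i => α i + α' i) * mfact (fun j => β j + β' j) : ℕ) : ℝ) ^ s) := by
  have hs0 : (0:ℝ) ≤ s := by linarith
  have h1ε : (0:ℝ) < 1 + ε := by linarith
  -- rewrite the derivative
  rw [mdx_mdy_key ha α α' β β']
  set A := ‖mdx (fun i => α i + α' i) (mdy (fun j => β j + β' j) a) p‖ with hA
  have hA0 : 0 ≤ A := norm_nonneg _
  set S := Real.sqrt (1 + ∑ i, (p.2 i) ^ 2) with hS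
  have hS0 : 0 ≤ S := Real.sqrt_nonneg _
  -- exponents of S agree
  have hSexp : ((msize β' : ℝ) - (k - (msize β : ℝ))) =
      ((msize (fun j => β j + β' j) : ℝ) - k) := by
    rw [msize_add]; push_cast; ring
  rw [hSexp]
  -- notation
  set Bα := ∏ i, (α i + α' i).choose (α i) with hBα
  set Bβ := ∏ j, (β j + β' j).choose (β j) with hBβ
  have hM'pos : (0:ℝ) < ((mfact α' * mfact β' : ℕ) : ℝ) := by
    have := Nat.mul_pos (mfact_pos α') (mfact_pos β'); exact_mod_cast this
  have hM''pos : (0:ℝ) <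
      ((mfact (fun i => α i + α' i) * mfact (fun j => β j + β' j) : ℕ) : ℝ) := by
    have := Nat.mul_pos (mfact_pos (fun i => α i + α' i)) (mfact_pos (fun j => β j + β' j))
    exact_mod_cast this
  have hM's : (0:ℝ) < ((mfact α' * mfact β' : ℕ) : ℝ) ^ s := Real.rpow_pos_of_pos hM'pos s
  have hM''s : (0:ℝ) <
      ((mfact (fun i => α i + α' i) * mfact (fun j => β j + β' j) : ℕ) : ℝ) ^ s :=
    Real.rpow_pos_of_pos hM''pos s
  -- the base combinatorial bound
  have hbase : ((Bα * Bβ : ℕ) : ℝ) * ε ^ (msize α + msize β) ≤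
      (1 + ε) ^ (msize (fun i => α i + α' i) + msize (fun j => β j + β' j)) := by
    push_cast
    rw [pow_add, pow_add]
    calc (Bα:ℝ) * (Bβ:ℝ) * (ε ^ msize α * ε ^ msize β)
        = ((Bα:ℝ) * ε ^ msize α) * ((Bβ:ℝ) * ε ^ msize β) := by ring
      _ ≤ (1+ε) ^ (msize (fun i => α i + α' i)) * (1+ε) ^ (msize (fun j => β j + β' j)) := by
          apply mul_le_mul (bin_prod_bound hε.le α α') (bin_prod_bound hε.le β β')
            (by positivity) (by positivity)
  -- the scalar inequality
  have hks := key_scalar s ε T hs0 hε hT ((Bα * Bβ : ℕ) : ℝ)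
    ((mfact α * mfact β : ℕ) : ℝ) ((mfact α' * mfact β' : ℕ) : ℝ)
    (by positivity) (by positivity) (by positivity)
    (msize α + msize β) (msize α' + msize β')
    (msize (fun i => α i + α' i) + msize (fun j => β j + β' j))
    (by rw [msize_add, msize_add]; ring) hbase
  -- identify the denominator
  have hMcast : ((mfact (fun i => α i + α' i) * mfact (fun j => β j + β' j) : ℕ) : ℝ)
      = ((Bα * Bβ : ℕ) : ℝ) * ((mfact α * mfact β : ℕ) : ℝ) *
        ((mfact α' * mfact β' : ℕ) : ℝ) := by
    rw [mfact_add α α', mfact_add β β', hBα, hBβ]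
    push_cast; ring
  have div_ineq : T ^ (msize α' + msize β') / ((mfact α' * mfact β' : ℕ) : ℝ) ^ s ≤
      (ε ^ (-(s * ((msize α + msize β : ℕ) : ℝ))) *
          T ^ (-((msize α + msize β : ℕ) : ℝ)) *
          ((mfact α : ℕ) : ℝ) ^ s * ((mfact β : ℕ) : ℝ) ^ s) *
        ((T * (1 + ε) ^ s) ^
            (msize (fun i => α i + α' i) + msize (fun j => β j + β' j)) /
          ((mfact (fun i => α i + α' i) * mfact (fun j => β j + β' j) : ℕ) : ℝ) ^ s) := by
    rw [mul_div_assoc'] at *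
    rw [div_le_div_iff₀ hM's hM''s, hMcast]
    have hMαβ : ((mfact α * mfact β : ℕ) : ℝ) ^ s =
        ((mfact α : ℕ) : ℝ) ^ s * ((mfact β : ℕ) : ℝ) ^ s := by
      push_cast
      exact Real.mul_rpow (by positivity) (by positivity)
    calc T ^ (msize α' + msize β') *
          (((Bα * Bβ : ℕ) : ℝ) * ((mfact α * mfact β : ℕ) : ℝ) *
            ((mfact α' * mfact β' : ℕ) : ℝ)) ^ s
        ≤ (ε ^ (-(s * ((msize α + msize β : ℕ) : ℝ))) *
            T ^ (-((msize α + msize β : ℕ) : ℝ)) * ((mfact α * mfact β : ℕ) : ℝ) ^ s) *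
          ((T * (1 + ε) ^ s) ^
              (msize (fun i => α i + α' i) + msize (fun j => β j + β' j)) *
            ((mfact α' * mfact β' : ℕ) : ℝ) ^ s) := by
          have : ((msize α + msize β : ℕ) : ℝ) = ((msize α + msize β : ℕ) : ℝ) := rfl
          push_cast at hks ⊢
          convert hks using 3
        _ = _ := by rw [hMαβ]; ring
  calc A * T ^ (msize α' + msize β') * h ^ m * S ^ ((msize (fun j => β j + β' j) : ℝ) - k) /
        ((mfact α' * mfact β' : ℕ) : ℝ) ^ s
      = (A * h ^ m * S ^ ((msize (fun j => β j + β' j) : ℝ) - k)) *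
        (T ^ (msize α' + msize β') / ((mfact α' * mfact β' : ℕ) : ℝ) ^ s) := by ring
    _ ≤ (A * h ^ m * S ^ ((msize (fun j => β j + β' j) : ℝ) - k)) *
        ((ε ^ (-(s * ((msize α + msize β : ℕ) : ℝ))) *
            T ^ (-((msize α + msize β : ℕ) : ℝ)) *
            ((mfact α : ℕ) : ℝ) ^ s * ((mfact β : ℕ) : ℝ) ^ s) *
          ((T * (1 + ε) ^ s) ^
              (msize (fun i => α i + α' i) + msize (fun j => β j + β' j)) /
            ((mfact (fun i => α i + α' i) * mfact (fun j => β j + β' j) : ℕ) : ℝ) ^ s)) := by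
        apply mul_le_mul_of_nonneg_left div_ineq
        have : (0:ℝ) ≤ h ^ m := (Real.rpow_pos_of_pos hh0 m).le
        positivity
    _ = _ := by ring

/-- **Derivative estimate for Gevrey quasi-norms** (inequality (3.26)):
`N̄_{m,k−|β|}(∂_x^α ∂_{ξ'}^β a, T) ≤ ε^{−s(|α|+|β|)} T^{−(|α|+|β|)} α!^s β!^s N̄_{m,k}(a,T(1+ε)^s)`. -/
theorem qnorm_deriv_estimate
    (s : ℝ) (hs : 1 < s) (h : ℝ) (hh : h ∈ Set.Ioc (0:ℝ) 1) (n : ℕ) (hn : 2 ≤ n)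
    (a : (Fin n → ℝ) × (Fin (n-1) → ℝ) → ℂ) (ha : ContDiff ℝ (⊤ : ℕ∞) a)
    (m k : ℝ) (ε : ℝ) (hε : 0 < ε) (T : ℝ) (hT : 0 < T)
    (α : Fin n → ℕ) (β : Fin (n-1) → ℕ) :
    qnorm n s h T m (k - (msize β : ℝ)) (mdx α (mdy β a)) ≤
      ENNReal.ofReal (ε ^ (-(s * ((msize α + msize β : ℕ) : ℝ))) *
          T ^ (-((msize α + msize β : ℕ) : ℝ)) *
          ((mfact α : ℕ) : ℝ) ^ s * ((mfact β : ℕ) : ℝ) ^ s) *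
        qnorm n s h (T * (1 + ε) ^ s) m k a := by
  obtain ⟨hh0, hh1⟩ := hh
  have hCnn : 0 ≤ ε ^ (-(s * ((msize α + msize β : ℕ) : ℝ))) *
      T ^ (-((msize α + msize β : ℕ) : ℝ)) *
      ((mfact α : ℕ) : ℝ) ^ s * ((mfact β : ℕ) : ℝ) ^ s := by positivity
  have hinjα : Function.Injective (fun (α' : Fin n → ℕ) => (fun i => α i + α' i)) := by
    intro x y hxy
    funext i
    exact Nat.add_left_cancel (congrFun hxy i)
  have hinjβ : Function.Injective (fun (β' : Fin (n-1) → ℕ) => (fun j => β j + β' j)) := by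
    intro x y hxy
    funext j
    exact Nat.add_left_cancel (congrFun hxy j)
  rw [qnorm]
  refine iSup_le fun p => ?_
  have step1 :
      ∑' (α' : Fin n → ℕ) (β' : Fin (n-1) → ℕ),
        ENNReal.ofReal (‖mdx α' (mdy β' (mdx α (mdy β a))) p‖ *
          T ^ (msize α' + msize β') * h ^ m *
          (Real.sqrt (1 + ∑ i, (p.2 i) ^ 2)) ^ ((msize β' : ℝ) - (k - (msize β : ℝ))) /
          ((mfact α' * mfact β' : ℕ) : ℝ) ^ s)
      ≤ ENNReal.ofReal (ε ^ (-(s * ((msize α + msize β : ℕ) : ℝ))) *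
          T ^ (-((msize α + msize β : ℕ) : ℝ)) *
          ((mfact α : ℕ) : ℝ) ^ s * ((mfact β : ℕ) : ℝ) ^ s) *
        ∑' (α' : Fin n → ℕ) (β' : Fin (n-1) → ℕ),
          ENNReal.ofReal (‖mdx (fun i => α i + α' i) (mdy (fun j => β j + β' j) a) p‖ *
            (T * (1 + ε) ^ s) ^
              (msize (fun i => α i + α' i) + msize (fun j => β j + β' j)) * h ^ m *
            (Real.sqrt (1 + ∑ i, (p.2 i) ^ 2)) ^
              ((msize (fun j => β j + β' j) : ℝ) - k) /
            ((mfact (fun i => α i + α' i) * mfact (fun j => β j + β' j) : ℕ) : ℝ) ^ s) := by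
    rw [← ENNReal.tsum_mul_left]
    refine ENNReal.tsum_le_tsum fun α' => ?_
    rw [← ENNReal.tsum_mul_left]
    refine ENNReal.tsum_le_tsum fun β' => ?_
    rw [← ENNReal.ofReal_mul hCnn]
    exact ENNReal.ofReal_le_ofReal
      (termwise_ineq n s h T m k ε hs hh0 hε hT a ha α α' β β' p)
  refine step1.trans ?_
  refine mul_le_mul' le_rfl ?_
  have step2 :
      ∑' (α' : Fin n → ℕ) (β' : Fin (n-1) → ℕ),
        ENNReal.ofReal (‖mdx (fun i => α i + α' i) (mdy (fun j => β j + β' j) a) p‖ *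
          (T * (1 + ε) ^ s) ^
            (msize (fun i => α i + α' i) + msize (fun j => β j + β' j)) * h ^ m *
          (Real.sqrt (1 + ∑ i, (p.2 i) ^ 2)) ^
            ((msize (fun j => β j + β' j) : ℝ) - k) /
          ((mfact (fun i => α i + α' i) * mfact (fun j => β j + β' j) : ℕ) : ℝ) ^ s)
      ≤ ∑' (α'' : Fin n → ℕ) (β'' : Fin (n-1) → ℕ),
          ENNReal.ofReal (‖mdx α'' (mdy β'' a) p‖ *
            (T * (1 + ε) ^ s) ^ (msize α'' + msize β'') * h ^ m *
            (Real.sqrt (1 + ∑ i, (p.2 i) ^ 2)) ^ ((msize β'' : ℝ) - k) /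
            ((mfact α'' * mfact β'' : ℕ) : ℝ) ^ s) := by
    have inner : ∀ α'' : Fin n → ℕ,
        ∑' (β' : Fin (n-1) → ℕ),
          ENNReal.ofReal (‖mdx α'' (mdy (fun j => β j + β' j) a) p‖ *
            (T * (1 + ε) ^ s) ^ (msize α'' + msize (fun j => β j + β' j)) * h ^ m *
            (Real.sqrt (1 + ∑ i, (p.2 i) ^ 2)) ^ ((msize (fun j => β j + β' j) : ℝ) - k) /
            ((mfact α'' * mfact (fun j => β j + β' j) : ℕ) : ℝ) ^ s)
        ≤ ∑' (β'' : Fin (n-1) → ℕ),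
          ENNReal.ofReal (‖mdx α'' (mdy β'' a) p‖ *
            (T * (1 + ε) ^ s) ^ (msize α'' + msize β'') * h ^ m *
            (Real.sqrt (1 + ∑ i, (p.2 i) ^ 2)) ^ ((msize β'' : ℝ) - k) /
            ((mfact α'' * mfact β'' : ℕ) : ℝ) ^ s) := fun α'' =>
      ENNReal.tsum_comp_le_tsum_of_injective hinjβ _
    calc _ ≤ ∑' (α' : Fin n → ℕ) (β'' : Fin (n-1) → ℕ),
          ENNReal.ofReal (‖mdx (fun i => α i + α' i) (mdy β'' a) p‖ *
            (T * (1 + ε) ^ s) ^ (msize (fun i => α i + α' i) + msize β'') * h ^ m *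
            (Real.sqrt (1 + ∑ i, (p.2 i) ^ 2)) ^ ((msize β'' : ℝ) - k) /
            ((mfact (fun i => α i + α' i) * mfact β'' : ℕ) : ℝ) ^ s) :=
        ENNReal.tsum_le_tsum fun α' => inner (fun i => α i + α' i)
      _ ≤ _ := ENNReal.tsum_comp_le_tsum_of_injective hinjα
          (fun α'' => ∑' (β'' : Fin (n-1) → ℕ),
            ENNReal.ofReal (‖mdx α'' (mdy β'' a) p‖ *
              (T * (1 + ε) ^ s) ^ (msize α'' + msize β'') * h ^ m *
              (Real.sqrt (1 + ∑ i, (p.2 i) ^ 2)) ^ ((msize β'' : ℝ) - k) /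
              ((mfact α'' * mfact β'' : ℕ) : ℝ) ^ s))
  refine step2.trans ?_
  conv_rhs => rw [qnorm]
  exact le_iSup (fun p : (Fin n → ℝ) × (Fin (n-1) → ℝ) =>
    ∑' (α'' : Fin n → ℕ) (β'' : Fin (n-1) → ℕ),
      ENNReal.ofReal (‖mdx α'' (mdy β'' a) p‖ *
        (T * (1 + ε) ^ s) ^ (msize α'' + msize β'') * h ^ m *
        (Real.sqrt (1 + ∑ i, (p.2 i) ^ 2)) ^ ((msize β'' : ℝ) - k) /
        ((mfact α'' * mfact β'' : ℕ) : ℝ) ^ s)) p
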